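/- Let Q be a finite quiver, (U, U^⊥[1]) a split t-structure in D^b(mod kQ), and E the direct sum of a complete set of representatives of isomorphism classes of indecomposable Ext-projective objects of U. If E is nonzero, then E belongs to the heart U ∩ U^⊥[1]; in particular U is not a triangulated subcategory. -/

import Mathlib

open CategoryTheory Limits Pretriangulated

universe v u

namespace SplitTStructuresPaper

variable (D : Type u) [Category.{v} D] [HasZeroObject D] [Preadditive D]
  [HasShift D ℤ] [∀ n : ℤ, (shiftFunctor D n).Additive] [Pretriangulated D]

variable {D}

/-- Right orthogonal of a class of objects. -/
def rOrth (T : Set D) : Set D := {Y | ∀ X ∈ T, ∀ f : X ⟶ Y, f = 0}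

/-- An object of a preadditive category is indecomposable if it is nonzero and its only
idempotent endomorphisms are `0` and the identity. -/
def Indec (X : D) : Prop :=
  ¬ IsZero X ∧ ∀ e : X ⟶ X, e ≫ e = e → e = 0 ∨ e = 𝟙 X

/-- `U` is the aisle of a t-structure `(U, U^⊥[1])`: `U` is closed under `[1]` and every
object fits into a distinguished triangle `X ⟶ Y ⟶ Z ⟶ X[1]` with `X ∈ U`, `Z ∈ U^⊥`
(Keller–Vossieck). -/
def IsAisle (U : Set D) : Prop :=
  (∀ X ∈ U, X⟦(1 : ℤ)⟧ ∈ U) ∧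
  ∀ Y : D, ∃ (X Z : D) (f : X ⟶ Y) (g : Y ⟶ Z) (h : Z ⟶ X⟦(1 : ℤ)⟧),
    Triangle.mk f g h ∈ (distTriang D) ∧ X ∈ U ∧ Z ∈ rOrth U

/-- A split t-structure: every indecomposable object lies in `U` or in `U^⊥`. -/
def IsSplitTStructure (U : Set D) : Prop :=
  IsAisle U ∧ ∀ X : D, Indec X → X ∈ U ∨ X ∈ rOrth U

variable (D) in
/-- A Krull–Schmidt category: every object is a finite biproduct of indecomposables
(with local endomorphism rings). -/
def IsKrullSchmidt [HasFiniteBiproducts D] : Prop :=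
  ∀ X : D, ∃ (n : ℕ) (f : Fin n → D), (∀ i, Indec (f i)) ∧ Nonempty (X ≅ ⨁ f)

/-- `X` is an Ext-projective object of `U`: `X ∈ U` and `Hom(X, Y[1]) = 0` for all
`Y ∈ U`. -/
def ExtProj (U : Set D) (X : D) : Prop :=
  X ∈ U ∧ ∀ Y ∈ U, ∀ f : X ⟶ Y⟦(1 : ℤ)⟧, f = 0


section Aux

set_option linter.unusedSectionVars false in
lemma indec_of_shift (m : ℤ) {X : D} (h : Indec X) : Indec (X⟦m⟧) := by
  constructor
  · intro hz
    apply h.1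
    rw [IsZero.iff_id_eq_zero] at hz ⊢
    apply (shiftFunctor D m).map_injective
    rw [CategoryTheory.Functor.map_id, Functor.map_zero, hz]
  · intro e he
    obtain ⟨e', rfl⟩ := (shiftFunctor D m).map_surjective e
    have he' : e' ≫ e' = e' := by
      apply (shiftFunctor D m).map_injective
      rw [Functor.map_comp, he]
    rcases h.2 e' he' with h0 | h1
    · left; rw [h0, Functor.map_zero]
    · right; rw [h1, CategoryTheory.Functor.map_id]

/-- Master lemma: an object admitting no nonzero maps to `U^⊥` lies in `U`. -/
lemma mem_aisle_of_orth [HasFiniteBiproducts D] (hKS : IsKrullSchmidt D)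
    {U : Set D} (hU : IsSplitTStructure U)
    (hUiso : ∀ X Y : D, X ∈ U → Nonempty (X ≅ Y) → Y ∈ U)
    {Y : D} (hY : ∀ Z ∈ rOrth U, ∀ g : Y ⟶ Z, g = 0) : Y ∈ U := by
  obtain ⟨X, Z, f, g, h, hdt, hXU, hZ⟩ := hU.1.2 Y
  have hg : g = 0 := hY Z hZ g
  -- `Z` is a retract of `X⟦1⟧`
  obtain ⟨r, hr⟩ := Pretriangulated.Triangle.yoneda_exact₃ _ hdt (𝟙 Z)
    (by dsimp [Triangle.mk]; rw [hg, zero_comp]; exact rfl)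
  dsimp [Triangle.mk] at hr
  -- decompose `Z` and show every indecomposable factor is zero, hence `Z` is zero
  obtain ⟨m, z, hz, ⟨e⟩⟩ := hKS Z
  have hfalse : ∀ k : Fin m, False := by
    intro k
    set ik : z k ⟶ Z := biproduct.ι z k ≫ e.inv with hik
    set pk : Z ⟶ z k := e.hom ≫ biproduct.π z k with hpk
    have hip : ik ≫ pk = 𝟙 (z k) := by
      rw [hik, hpk, Category.assoc, ← Category.assoc e.inv, e.inv_hom_id,
        Category.id_comp, biproduct.ι_π_self]
    -- `z k ∈ rOrth U`
    have hzkOrth : z k ∈ rOrth U := by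
      intro W hW u
      have h1 : u = (u ≫ ik) ≫ pk := by rw [Category.assoc, hip, Category.comp_id]
      rw [h1, hZ W hW (u ≫ ik), zero_comp]
    -- `z k⟦-1⟧` is a retract of `X`
    set ε := shiftFunctorCompIsoId D (1 : ℤ) (-1 : ℤ) (by ring)
    set i2 : (z k)⟦(-1 : ℤ)⟧ ⟶ X := ((ik ≫ h)⟦(-1 : ℤ)⟧') ≫ ε.hom.app X with hi2
    set r2 : X ⟶ (z k)⟦(-1 : ℤ)⟧ := ε.inv.app X ≫ ((r ≫ pk)⟦(-1 : ℤ)⟧') with hr2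
    have hir2 : i2 ≫ r2 = 𝟙 ((z k)⟦(-1 : ℤ)⟧) := by
      rw [hi2, hr2, Category.assoc, ← Category.assoc (ε.hom.app X),
        Iso.hom_inv_id_app, Category.id_comp, ← Functor.map_comp]
      have : (ik ≫ h) ≫ r ≫ pk = 𝟙 (z k) := by
        have h' := congrArg (fun t => ik ≫ t ≫ pk) hr
        simp only [Category.id_comp, hip, Category.assoc] at h'
        rw [Category.assoc]
        exact (congrArg (fun t => ik ≫ t) (Category.assoc h r pk)).symm.trans h'.symm
      rw [this, CategoryTheory.Functor.map_id]
    have hindec : Indec ((z k)⟦(-1 : ℤ)⟧) := indec_of_shift _ (hz k)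
    have hzkU : (z k)⟦(-1 : ℤ)⟧ ∈ U := by
      rcases hU.2 _ hindec with hin | hout
      · exact hin
      · exfalso
        have : r2 = 0 := hout X hXU r2
        have : 𝟙 ((z k)⟦(-1 : ℤ)⟧) = 0 := by rw [← hir2, this, comp_zero]
        exact hindec.1 ((IsZero.iff_id_eq_zero _).2 this)
    -- hence `z k ∈ U`
    have hzkU' : z k ∈ U := by
      refine hUiso _ _ (hU.1.1 _ hzkU) ⟨?_⟩
      exact (shiftFunctorCompIsoId D (-1 : ℤ) (1 : ℤ) (by ring)).app (z k)
    -- contradiction with `z k ∈ rOrth U`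
    have : 𝟙 (z k) = 0 := hzkOrth (z k) hzkU' (𝟙 (z k))
    exact (hz k).1 ((IsZero.iff_id_eq_zero _).2 this)
  have hZzero : IsZero Z := by
    refine IsZero.of_iso ?_ e
    rw [IsZero.iff_id_eq_zero]
    exact biproduct.hom_ext _ _ (fun j => (hfalse j).elim)
  have : IsIso f := (Pretriangulated.Triangle.isZero₃_iff_isIso₁ _ hdt).1 hZzero
  exact hUiso X Y hXU ⟨asIso f⟩

end Aux

/-- Let `Q` be a finite quiver, `(U, U^⊥[1])` a split t-structure in
`D^b(mod kQ)` (modelled by the Krull–Schmidt triangulated category `D`), and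
`E = E₁ ⊕ ⋯ ⊕ Eₙ` the direct sum of a complete set of representatives of isomorphism
classes of indecomposable Ext-projective objects of `U`.  If `E` is nonzero then `E`
belongs to the heart `U ∩ U^⊥[1]`; in particular `U` is not a triangulated
subcategory. -/
theorem extProjective_sum_in_heart
    (Q : Type) [Quiver Q] [Fintype Q]
    [HasFiniteBiproducts D] (hKS : IsKrullSchmidt D)
    (U : Set D) (hU : IsSplitTStructure U)
    (hUiso : ∀ X Y : D, X ∈ U → Nonempty (X ≅ Y) → Y ∈ U)
    (n : ℕ) (Erep : Fin n → D)
    (hrep : ∀ i, Indec (Erep i) ∧ ExtProj U (Erep i))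
    (hirred : ∀ i j, Nonempty (Erep i ≅ Erep j) → i = j)
    (hcomplete : ∀ X : D, Indec X → ExtProj U X → ∃ i, Nonempty (X ≅ Erep i))
    (hne : 0 < n) :
    ((⨁ Erep) ∈ U ∧ (⨁ Erep)⟦(-1 : ℤ)⟧ ∈ rOrth U) ∧
      ¬ (∀ X ∈ U, X⟦(-1 : ℤ)⟧ ∈ U) := by
  have hEU : (⨁ Erep) ∈ U := by
    apply mem_aisle_of_orth hKS hU hUiso
    intro Z hZ g
    refine biproduct.hom_ext' _ _ (fun j => ?_)
    rw [hZ (Erep j) (hrep j).2.1 (biproduct.ι Erep j ≫ g), comp_zero]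
  have hShiftOrth : ∀ i : Fin n, (Erep i)⟦(-1 : ℤ)⟧ ∈ rOrth U := by
    intro i
    have hindec : Indec ((Erep i)⟦(-1 : ℤ)⟧) := indec_of_shift _ (hrep i).1
    rcases hU.2 _ hindec with hin | hout
    · exfalso
      set ε := shiftFunctorCompIsoId D (-1 : ℤ) (1 : ℤ) (by ring)
      have h0 : ε.inv.app (Erep i) = 0 :=
        (hrep i).2.2 _ hin (ε.inv.app (Erep i))
      have h1 : ε.inv.app (Erep i) ≫ ε.hom.app (Erep i) = 𝟙 _ :=
        ε.inv_hom_id_app (Erep i)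
      rw [h0, zero_comp] at h1
      simp only [Functor.id_obj] at h1
      exact (hrep i).1.1 ((IsZero.iff_id_eq_zero _).2 h1.symm)
    · exact hout
  have hEshift : (⨁ Erep)⟦(-1 : ℤ)⟧ ∈ rOrth U := by
    intro X hX f
    set e := (shiftFunctor D (-1 : ℤ)).mapBiproduct Erep
    have h0 : f ≫ e.hom = 0 := by
      refine biproduct.hom_ext _ _ (fun j => ?_)
      rw [Category.assoc, zero_comp]
      exact hShiftOrth j X hX _
    calc f = (f ≫ e.hom) ≫ e.inv := by rw [Category.assoc, e.hom_inv_id, Category.comp_id]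
      _ = 0 := by rw [h0, zero_comp]
  refine ⟨⟨hEU, hEshift⟩, ?_⟩
  intro hclosed
  have h1 : (⨁ Erep)⟦(-1 : ℤ)⟧ ∈ U := hclosed _ hEU
  have h2 : 𝟙 ((⨁ Erep)⟦(-1 : ℤ)⟧) = 0 := hEshift _ h1 _
  have h3 : IsZero ((⨁ Erep)⟦(-1 : ℤ)⟧) := (IsZero.iff_id_eq_zero _).2 h2
  have h4 : IsZero (⨁ Erep) := by
    refine IsZero.of_iso ?_
      ((shiftFunctorCompIsoId D (-1 : ℤ) (1 : ℤ) (by ring)).symm.app (⨁ Erep))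
    exact Functor.map_isZero (shiftFunctor D (1 : ℤ)) h3
  set j : Fin n := ⟨0, hne⟩
  have h5 : biproduct.ι Erep j = 0 := h4.eq_zero_of_tgt _
  have h6 : 𝟙 (Erep j) = 0 := by
    rw [← biproduct.ι_π_self Erep j, h5, zero_comp]
  exact (hrep j).1.1 ((IsZero.iff_id_eq_zero _).2 h6)


end SplitTStructuresPaper
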